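/- arXiv:2506.15932 — 3 statements merged into one kernel-verified Lean document; each statement's English description precedes it below -/
import Mathlib

section
/- For every integer m ≥ 1, there exists a remainder R(m) with |R(m)| < 1/m such that log(m!) = m·log(m) − m + (1/2)·log(2π·m) + R(m). -/
open Real Stirling Filter Finset Topology

lemma stirling_log_tendsto :
    Tendsto (fun n => Real.log (stirlingSeq n)) atTop (𝓝 (Real.log (Real.sqrt π))) :=
  ((Real.continuousAt_log (by positivity)).tendsto.comp tendsto_stirlingSeq_sqrt_pi)

lemma stirling_log_ge (n : ℕ) : Real.log (Real.sqrt π) ≤ Real.log (stirlingSeq (n + 1)) := by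
  have ht : Tendsto (Real.log ∘ stirlingSeq ∘ Nat.succ) atTop (𝓝 (Real.log (Real.sqrt π))) :=
    stirling_log_tendsto.comp (tendsto_add_atTop_nat 1)
  exact log_stirlingSeq'_antitone.le_of_tendsto ht n

lemma stirling_log_upper (n : ℕ) (hn : 1 ≤ n) :
    Real.log (stirlingSeq (n + 1)) - Real.log (Real.sqrt π) ≤ 1 / (4 * n) := by
  set f : ℕ → ℝ := fun j => 1 / (4 * ((n : ℝ) + j)) with hfdef
  have key : ∀ k : ℕ, Real.log (stirlingSeq (n + 1)) - Real.log (stirlingSeq (n + 1 + k))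
      ≤ 1 / (4 * n) := by
    intro k
    have tele := Finset.sum_range_sub' (fun j => Real.log (stirlingSeq (n + 1 + j))) k
    have tele2 := Finset.sum_range_sub' f k
    rw [← tele]
    have hstep : ∀ j ∈ Finset.range k,
        Real.log (stirlingSeq (n + 1 + j)) - Real.log (stirlingSeq (n + 1 + (j + 1)))
        ≤ f j - f (j + 1) := by
      intro j _
      have h1 := log_stirlingSeq_sub_log_stirlingSeq_succ (n + j + 1)
      have e1 : n + j + 1 = n + 1 + j := by omega
      have e2 : n + 1 + j + 1 = n + 1 + (j + 1) := by omega
      rw [e1, e2] at h1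
      refine h1.trans ?_
      have hnj : (1 : ℝ) ≤ (n : ℝ) + j := by
        have h1n : (1 : ℝ) ≤ (n : ℝ) := by exact_mod_cast hn
        have h0j : (0 : ℝ) ≤ (j : ℝ) := Nat.cast_nonneg j
        linarith
      simp only [hfdef]
      push_cast
      rw [div_sub_div _ _ (by positivity) (by positivity),
        div_le_div_iff₀ (by positivity) (by positivity)]
      nlinarith [sq_nonneg ((n:ℝ) + j)]
    calc ∑ j ∈ Finset.range k,
          (Real.log (stirlingSeq (n + 1 + j)) - Real.log (stirlingSeq (n + 1 + (j + 1))))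
        ≤ ∑ j ∈ Finset.range k, (f j - f (j + 1)) := Finset.sum_le_sum hstep
      _ = f 0 - f k := tele2
      _ ≤ 1 / (4 * n) := by
          have h0 : (0 : ℝ) ≤ f k := by simp only [hfdef]; positivity
          have hf0 : f 0 = 1 / (4 * (n : ℝ)) := by simp [hfdef]
          linarith
  have ht : Tendsto (fun k => Real.log (stirlingSeq (n + 1)) - Real.log (stirlingSeq (n + 1 + k)))
      atTop (𝓝 (Real.log (stirlingSeq (n + 1)) - Real.log (Real.sqrt π))) := by
    refine tendsto_const_nhds.sub
      ((stirling_log_tendsto.comp (tendsto_add_atTop_nat (n + 1))).congr fun k => ?_)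
    exact congrArg (fun i => Real.log (stirlingSeq i)) (Nat.add_comm k (n + 1))
  exact le_of_tendsto ht (Filter.Eventually.of_forall key)

theorem stirling_factorial (m : ℕ) (hm : 1 ≤ m) :
    ∃ R : ℝ, |R| < 1 / m ∧
      Real.log (Nat.factorial m) =
        m * Real.log m - m + (1 / 2) * Real.log (2 * Real.pi * m) + R := by
  obtain ⟨n, rfl⟩ : ∃ n, m = n + 1 := ⟨m - 1, by omega⟩
  set m := n + 1
  refine ⟨Real.log (stirlingSeq m) - Real.log (Real.sqrt π), ?_, ?_⟩
  · have hR0 : 0 ≤ Real.log (stirlingSeq m) - Real.log (Real.sqrt π) :=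
      sub_nonneg.mpr (stirling_log_ge n)
    rw [abs_of_nonneg hR0]
    rcases Nat.eq_or_lt_of_le (Nat.one_le_iff_ne_zero.mpr (Nat.succ_ne_zero n)) with h1 | h2
    · -- m = 1
      have hn0 : n = 0 := by omega
      subst hn0
      have hs1 : stirlingSeq 1 = Real.exp 1 / Real.sqrt 2 := stirlingSeq_one
      have hlog1 : Real.log (stirlingSeq 1) = 1 - Real.log (Real.sqrt 2) := by
        rw [hs1, Real.log_div (Real.exp_ne_zero 1) (by positivity), Real.log_exp]
      have h2 : 0 < Real.log (Real.sqrt 2) := Real.log_pos (by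
        rw [show (1:ℝ) = Real.sqrt 1 by simp]
        exact Real.sqrt_lt_sqrt (by norm_num) (by norm_num))
      have hπ : 0 < Real.log (Real.sqrt π) := Real.log_pos (by
        rw [show (1:ℝ) = Real.sqrt 1 by simp]
        exact Real.sqrt_lt_sqrt (by norm_num) (by linarith [Real.pi_gt_three]))
      show Real.log (stirlingSeq 1) - Real.log (Real.sqrt π) < 1 / ((0:ℕ) + 1 : ℕ)
      rw [hlog1]
      norm_num
      linarith
    · -- m ≥ 2, i.e. n ≥ 1
      have hn1 : 1 ≤ n := by omega
      have hub := stirling_log_upper n hn1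
      have hlt : (1 : ℝ) / (4 * n) < 1 / m := by
        rw [div_lt_div_iff₀ (by positivity) (by exact_mod_cast Nat.succ_pos n)]
        have h1n : (1 : ℝ) ≤ (n : ℝ) := by exact_mod_cast hn1
        push_cast
        have hmn : (m : ℝ) = (n : ℝ) + 1 := Nat.cast_succ n
        linarith
      linarith
  · have hm0 : (0 : ℝ) < m := by exact_mod_cast Nat.succ_pos n
    have hf := log_stirlingSeq_formula m
    have hde : Real.log ((m : ℝ) / Real.exp 1) = Real.log m - 1 := by
      rw [Real.log_div (ne_of_gt hm0) (Real.exp_ne_zero 1), Real.log_exp]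
    have hsq : Real.log (Real.sqrt π) = 1 / 2 * Real.log π := by
      rw [Real.log_sqrt Real.pi_pos.le]; ring
    have h2πm : Real.log (2 * π * m) = Real.log (2 * m) + Real.log π := by
      rw [show (2 * π * (m:ℝ)) = (2 * m) * π by ring,
        Real.log_mul (by positivity) (ne_of_gt Real.pi_pos)]
    rw [hde] at hf
    rw [h2πm, hsq]
    linarith [hf]
end

section
/- For every real x > 0, there exists R(x) with |R(x)| ≤ 1/(12x) such that log Γ(x) = (x − 1/2)·log(x) − x + (1/2)·log(2π) + R(x). -/
open Real Filter Topology

noncomputable def sg (y : ℝ) : ℝ := (y + 1/2) * Real.log (1 + 1/y) - 1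
noncomputable def sf (y : ℝ) : ℝ := Real.log (Real.Gamma y) - (y - 1/2) * Real.log y + y

lemma sg_hasSum {y : ℝ} (hy : 0 < y) :
    HasSum (fun k : ℕ => (1 / (2*(k:ℝ)+3)) * (1/(2*y+1))^(2*(k+1))) (sg y) := by
  have h := Real.hasSum_log_one_add_inv hy
  have h2 : (2:ℝ)*y+1 ≠ 0 := by positivity
  have h' := h.mul_left (y + 1/2)
  have heq : ∀ k : ℕ, (y + 1/2) * ((2:ℝ) * (1 / (2 * (k:ℝ) + 1)) * (1 / (2 * y + 1)) ^ (2 * k + 1))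
      = (1 / (2*(k:ℝ)+1)) * (1/(2*y+1))^(2*k) := by
    intro k
    have : (1/(2*y+1))^(2*k+1) = (1/(2*y+1))^(2*k) * (1/(2*y+1)) := pow_succ _ _
    rw [this]
    field_simp
  rw [funext heq] at h'
  have h0 : (fun k : ℕ => (1 / (2*(k:ℝ)+1)) * (1/(2*y+1))^(2*k)) 0 = 1 := by
    norm_num
  have h3 := (hasSum_nat_add_iff' (f := fun k : ℕ => (1 / (2*(k:ℝ)+1)) * (1/(2*y+1))^(2*k)) 1).2 h'
  simp only [Finset.range_one, Finset.sum_singleton, h0] at h3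
  rw [sg, one_div y]
  convert h3 using 2 with k
  · rfl
  push_cast
  ring_nf

lemma sg_nonneg {y : ℝ} (hy : 0 < y) : 0 ≤ sg y :=
  (sg_hasSum hy).nonneg fun k => by positivity

lemma sg_le {y : ℝ} (hy : 0 < y) : sg y ≤ 1/(12*y) - 1/(12*(y+1)) := by
  set t : ℝ := 1/(2*y+1) with ht
  have ht0 : 0 < t := by positivity
  have ht1 : t < 1 := by
    rw [ht, div_lt_one (by positivity)]; linarith
  have hsq : t^2 < 1 := by nlinarith
  have hgeo : HasSum (fun k : ℕ => (t^2)^k) (1/(1-t^2)) := by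
    simpa [one_div] using hasSum_geometric_of_lt_one (by positivity) hsq
  have hgeo' : HasSum (fun k : ℕ => (1/3) * t^2 * (t^2)^k) ((1/3) * t^2 * (1/(1-t^2))) :=
    hgeo.mul_left _
  have hle : sg y ≤ (1/3) * t^2 * (1/(1-t^2)) := by
    refine hasSum_le (fun k => ?_) (sg_hasSum hy) hgeo'
    have h1 : (1 : ℝ)/(2*(k:ℝ)+3) ≤ 1/3 := by
      apply div_le_div_of_nonneg_left one_pos.le (by norm_num)
      · linarith [Nat.cast_nonneg (α := ℝ) k]
    have h2 : t^(2*(k+1)) = t^2 * (t^2)^k := by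
      rw [← pow_mul]; ring
    calc (1/(2*(k:ℝ)+3)) * t^(2*(k+1)) ≤ (1/3) * t^(2*(k+1)) := by
          apply mul_le_mul_of_nonneg_right h1 (by positivity)
      _ = (1/3) * t^2 * (t^2)^k := by rw [h2]; ring
  refine hle.trans (le_of_eq ?_)
  have h2 : (2:ℝ)*y+1 ≠ 0 := by positivity
  have h3 : (1:ℝ) - t^2 = 4*y*(y+1)/(2*y+1)^2 := by
    rw [ht]; field_simp; ring
  rw [h3, ht]
  field_simp
  ring

lemma sf_rec {y : ℝ} (hy : 0 < y) : sf y - sf (y + 1) = sg y := by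
  have hΓ : Real.Gamma (y + 1) = y * Real.Gamma y := Real.Gamma_add_one hy.ne'
  have hΓpos : 0 < Real.Gamma y := Real.Gamma_pos_of_pos hy
  have hlog : Real.log (Real.Gamma (y+1)) = Real.log y + Real.log (Real.Gamma y) := by
    rw [hΓ, Real.log_mul hy.ne' hΓpos.ne']
  have hlog2 : Real.log (1 + 1/y) = Real.log (y+1) - Real.log y := by
    rw [← Real.log_div (by positivity) hy.ne']
    congr 1
    field_simp
  rw [sf, sf, sg, hlog, hlog2]
  ring

lemma sf_telescope (x : ℝ) (n : ℕ) (hx : 0 < x) :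
    ∑ k ∈ Finset.range n, sg (x + k) = sf x - sf (x + n) := by
  induction n with
  | zero => simp
  | succ n ih =>
    rw [Finset.sum_range_succ, ih, ← sf_rec (by positivity : (0:ℝ) < x + n)]
    push_cast [Nat.cast_add]
    ring

lemma gamma_prod {x : ℝ} (hx : 0 < x) (n : ℕ) :
    Real.Gamma (x + n) = Real.Gamma x * ∏ j ∈ Finset.range n, (x + j) := by
  induction n with
  | zero => simp
  | succ n ih =>
    have h1 : x + (n+1 : ℕ) = (x + n) + 1 := by push_cast; ring
    rw [h1, Real.Gamma_add_one (by positivity : (0:ℝ) < x + n).ne', ih,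
      Finset.prod_range_succ]
    ring

lemma sf_tendsto {x : ℝ} (hx : 0 < x) :
    Tendsto (fun n : ℕ => sf (x + n)) atTop (𝓝 ((1/2) * Real.log (2 * π))) := by
  have hπ : (0:ℝ) < π := Real.pi_pos
  -- the three convergent pieces
  have hA : Tendsto (fun n : ℕ => Real.log (Real.Gamma x) - Real.log (Real.GammaSeq x n))
      atTop (𝓝 0) := by
    have := ((Real.GammaSeq_tendsto_Gamma x).log (Real.Gamma_pos_of_pos hx).ne')
    simpa using (tendsto_const_nhds (x := Real.log (Real.Gamma x))).sub this
  have hS : Tendsto (fun n : ℕ => Real.log (Stirling.stirlingSeq n)) atTop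
      (𝓝 (Real.log π / 2)) := by
    have h := (Stirling.tendsto_stirlingSeq_sqrt_pi).log (by positivity : Real.sqrt π ≠ 0)
    rwa [Real.log_sqrt hπ.le] at h
  have hL1 : Tendsto (fun n : ℕ => Real.log (1 + (x+1)/n)) atTop (𝓝 0) := by
    have h1 : Tendsto (fun n : ℕ => 1 + (x+1)/n) atTop (𝓝 1) := by
      have := (tendsto_const_nhds (x := (x+1))).div_atTop
        (tendsto_natCast_atTop_atTop (R := ℝ))
      simpa using (tendsto_const_nhds (x := (1:ℝ))).add this
    simpa using h1.log one_ne_zero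
  have hL2 : Tendsto (fun n : ℕ => (n:ℝ) * Real.log (1 + (x+1)/n)) atTop (𝓝 (x+1)) :=
    (Real.tendsto_mul_log_one_add_div_atTop (x+1)).comp tendsto_natCast_atTop_atTop
  -- combined limit
  have hB : Tendsto (fun n : ℕ =>
      (Real.log (Real.Gamma x) - Real.log (Real.GammaSeq x n)) +
      (Real.log (Stirling.stirlingSeq n) + (1/2) * Real.log 2
        - (x + 1/2) * Real.log (1 + (x+1)/n) - (n:ℝ) * Real.log (1 + (x+1)/n) + x + 1))
      atTop (𝓝 ((1/2) * Real.log (2 * π))) := by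
    have := hA.add (((((hS.add_const ((1/2) * Real.log 2)).sub
      (hL1.const_mul (x + 1/2))).sub hL2).add_const x).add_const 1)
    convert this using 2
    rw [Real.log_mul two_ne_zero hπ.ne']
    ring
  -- eventual equality
  have heq : ∀ᶠ n : ℕ in atTop, sf (x + (n+1 : ℕ)) =
      (Real.log (Real.Gamma x) - Real.log (Real.GammaSeq x n)) +
      (Real.log (Stirling.stirlingSeq n) + (1/2) * Real.log 2
        - (x + 1/2) * Real.log (1 + (x+1)/n) - (n:ℝ) * Real.log (1 + (x+1)/n) + x + 1) := by
    filter_upwards [eventually_ge_atTop 1] with n hn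
    have hn0 : (0:ℝ) < n := by exact_mod_cast hn
    have hP : (0:ℝ) < ∏ j ∈ Finset.range (n+1), (x + j) := by
      apply Finset.prod_pos; intro j _; positivity
    have hGs : Real.GammaSeq x n = (n:ℝ) ^ x * (Nat.factorial n) / ∏ j ∈ Finset.range (n+1), (x + j) := rfl
    have hrp : (0:ℝ) < (n:ℝ) ^ x := Real.rpow_pos_of_pos hn0 x
    have hfac : (0:ℝ) < ((Nat.factorial n) : ℝ) := by exact_mod_cast n.factorial_pos
    -- log of GammaSeq
    have hlogGs : Real.log (Real.GammaSeq x n)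
        = x * Real.log n + Real.log ((Nat.factorial n)) - Real.log (∏ j ∈ Finset.range (n+1), (x + j)) := by
      rw [hGs, Real.log_div (by positivity) hP.ne', Real.log_mul hrp.ne' hfac.ne',
        Real.log_rpow hn0]
    -- log of Gamma (x + (n+1))
    have hprod := gamma_prod hx (n+1)
    have hlogΓ : Real.log (Real.Gamma (x + (n+1:ℕ)))
        = Real.log (Real.Gamma x) + Real.log (∏ j ∈ Finset.range (n+1), (x + j)) := by
      rw [hprod, Real.log_mul (Real.Gamma_pos_of_pos hx).ne' hP.ne']
    -- Stirling formula for log n!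
    have hstir : Real.log ((Nat.factorial n)) = Real.log (Stirling.stirlingSeq n)
        + (1/2) * Real.log 2 + (1/2) * Real.log n + (n:ℝ) * Real.log n - n := by
      have h := Stirling.log_stirlingSeq_formula n
      have h2 : Real.log (2 * (n:ℝ)) = Real.log 2 + Real.log n :=
        Real.log_mul two_ne_zero hn0.ne'
      have h3 : Real.log ((n:ℝ) / Real.exp 1) = Real.log n - 1 := by
        rw [Real.log_div hn0.ne' (Real.exp_ne_zero 1), Real.log_exp]
      rw [h2, h3] at h
      linarith [h]
    -- log (x + n + 1) - log n
    have hlsplit : Real.log (x + (n:ℝ) + 1) = Real.log (1 + (x+1)/n) + Real.log n := by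
      rw [← Real.log_mul (by positivity) hn0.ne']
      congr 1
      field_simp
      ring
    have hy : x + ((n:ℕ)+1 : ℕ) = x + (n:ℝ) + 1 := by push_cast; ring
    rw [sf, hy, ← hy, hlogΓ, hy]
    have hPlog : Real.log (∏ j ∈ Finset.range (n+1), (x + j))
        = x * Real.log n + Real.log ((Nat.factorial n)) - Real.log (Real.GammaSeq x n) := by
      linarith [hlogGs]
    rw [hPlog, hstir, hlsplit]
    ring
  have hshift : Tendsto (fun n : ℕ => sf (x + (n+1 : ℕ))) atTop
      (𝓝 ((1/2) * Real.log (2 * π))) := hB.congr' (by filter_upwards [heq] with n h using h.symm)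
  exact (tendsto_add_atTop_iff_nat 1).1 hshift

theorem stirling_logGamma (x : ℝ) (hx : 0 < x) :
    ∃ R : ℝ, |R| ≤ 1 / (12 * x) ∧
      Real.log (Real.Gamma x) =
        (x - 1 / 2) * Real.log x - x + (1 / 2) * Real.log (2 * Real.pi) + R := by
  refine ⟨sf x - (1/2) * Real.log (2 * Real.pi), ?_, by rw [sf]; ring⟩
  have hT : Tendsto (fun n : ℕ => ∑ k ∈ Finset.range n, sg (x + k)) atTop
      (𝓝 (sf x - (1/2) * Real.log (2 * Real.pi))) := by
    have := (tendsto_const_nhds (x := sf x)).sub (sf_tendsto hx)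
    exact this.congr fun n => (sf_telescope x n hx).symm
  have h0 : ∀ n : ℕ, 0 ≤ ∑ k ∈ Finset.range n, sg (x + k) := fun n =>
    Finset.sum_nonneg fun k _ => sg_nonneg (by positivity)
  have h1 : ∀ n : ℕ, ∑ k ∈ Finset.range n, sg (x + k) ≤ 1 / (12 * x) := by
    intro n
    set u : ℕ → ℝ := fun k => 1/(12*(x + k)) with hu
    have hb : ∑ k ∈ Finset.range n, sg (x + k)
        ≤ ∑ k ∈ Finset.range n, (u k - u (k+1)) := by
      refine Finset.sum_le_sum fun k _ => ?_
      have h := sg_le (by positivity : (0:ℝ) < x + k)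
      have : u k - u (k+1) = 1/(12*(x + k)) - 1/(12*(x + k + 1)) := by
        rw [hu]; push_cast; ring
      rw [this]
      exact h
    have htel : ∑ k ∈ Finset.range n, (u k - u (k+1)) = u 0 - u n :=
      Finset.sum_range_sub' u n
    have hun : 0 ≤ u n := by rw [hu]; positivity
    have hu0 : u 0 = 1/(12*x) := by rw [hu]; norm_num
    rw [htel, hu0] at hb
    linarith
  rw [abs_le]
  constructor
  · have := ge_of_tendsto' hT h0
    have hx12 : (0:ℝ) < 1/(12*x) := by positivity
    linarith
  · exact le_of_tendsto' hT h1
end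

section
/- Let ℓ(x) = log Γ(n+1) − ∑_{j=1}^k log Γ(n·x_j + 1) + ∑_{j=1}^k n·x_j·log p_j on the simplex, with p_j > 0 fixed. For each n, ℓ attains a unique maximizer x̂ⁿ on the simplex, x̂ⁿ lies in the interior for all sufficiently large n, and x̂ⁿ → p as n → ∞. -/
open Finset Filter Topology

namespace MMC


/-- Pointwise Gibbs inequality. -/
lemma gibbs_le {t a : ℝ} (ht : 0 < t) (ha : 0 < a) :
    t * Real.log a - a ≤ t * Real.log t - t := by
  have h := Real.log_le_sub_one_of_pos (show 0 < a / t by positivity)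
  rw [Real.log_div ha.ne' ht.ne'] at h
  have h2 : t * (Real.log a - Real.log t) ≤ t * (a / t - 1) :=
    mul_le_mul_of_nonneg_left h ht.le
  have h3 : t * (a / t - 1) = a - t := by field_simp
  nlinarith

lemma gibbs_lt {t a : ℝ} (ht : 0 ≤ t) (ha : 0 < a) (hne : t ≠ a) :
    t * Real.log a - a < t * Real.log t - t := by
  rcases eq_or_lt_of_le ht with h0 | ht'
  · rw [← h0]; simpa using ha
  · have hd1 : a / t ≠ 1 := by
      intro hh
      exact hne (by field_simp at hh; linarith)
    have h := Real.log_lt_sub_one_of_pos (show 0 < a / t by positivity) hd1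
    rw [Real.log_div ha.ne' ht'.ne'] at h
    have h2 : t * (Real.log a - Real.log t) < t * (a / t - 1) :=
      (mul_lt_mul_iff_right₀ ht').mpr h
    have h3 : t * (a / t - 1) = a - t := by field_simp
    nlinarith

lemma fact_lower (m : ℕ) : (m : ℝ) ^ m ≤ Real.exp m * m.factorial := by
  induction m with
  | zero => simp
  | succ n ih =>
    have key : ((n : ℝ) + 1) ^ n ≤ Real.exp 1 * (n : ℝ) ^ n := by
      rcases Nat.eq_zero_or_pos n with h | h
      · subst h; simpa using Real.one_le_exp (by norm_num : (0:ℝ) ≤ 1)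
      · have hn : (0:ℝ) < n := by exact_mod_cast h
        have h1 : (n : ℝ) + 1 ≤ (n:ℝ) * Real.exp (1 / n) := by
          have := Real.add_one_le_exp (1 / (n:ℝ))
          calc (n:ℝ) + 1 = (n:ℝ) * (1 + 1/n) := by field_simp
          _ ≤ (n:ℝ) * Real.exp (1/n) := by nlinarith
        calc ((n:ℝ)+1)^n ≤ ((n:ℝ) * Real.exp (1/n))^n := by
              exact pow_le_pow_left₀ (by positivity) h1 n
        _ = (n:ℝ)^n * Real.exp (1/n) ^ n := by rw [mul_pow]
        _ = (n:ℝ)^n * Real.exp 1 := by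
              rw [← Real.exp_nat_mul]
              congr 1
              field_simp
        _ = Real.exp 1 * (n:ℝ)^n := by ring
    have hpos : (0:ℝ) < Real.exp n * n.factorial := by positivity
    push_cast [Nat.factorial_succ]
    calc ((n:ℝ)+1) ^ (n+1) = ((n:ℝ)+1) * ((n:ℝ)+1)^n := by ring
    _ ≤ ((n:ℝ)+1) * (Real.exp 1 * (n:ℝ)^n) := by
        apply mul_le_mul_of_nonneg_left _ (by positivity)
        exact key
    _ ≤ ((n:ℝ)+1) * (Real.exp 1 * (Real.exp n * n.factorial)) := by
        apply mul_le_mul_of_nonneg_left _ (by positivity)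
        exact mul_le_mul_of_nonneg_left ih (by positivity)
    _ = Real.exp ((n:ℝ)+1) * (((n:ℝ)+1) * n.factorial) := by rw [Real.exp_add]; ring

lemma fact_upper (m : ℕ) : Real.exp m * m.factorial ≤ ((m : ℝ) + 1) ^ (m + 1) := by
  induction m with
  | zero => simp
  | succ n ih =>
    have key : Real.exp 1 * ((n:ℝ)+1)^(n+2) ≤ ((n:ℝ)+2)^(n+2) := by
      have h1 : (0:ℝ) < (n:ℝ) + 2 := by positivity
      have h2 : (n:ℝ) + 1 ≤ ((n:ℝ)+2) * Real.exp (-(1/((n:ℝ)+2))) := by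
        have := Real.add_one_le_exp (-(1/((n:ℝ)+2)))
        have h3 : (-(1/((n:ℝ)+2))) + 1 = ((n:ℝ)+1)/((n:ℝ)+2) := by field_simp; ring
        rw [h3] at this
        calc (n:ℝ)+1 = ((n:ℝ)+2) * (((n:ℝ)+1)/((n:ℝ)+2)) := by field_simp
        _ ≤ ((n:ℝ)+2) * Real.exp (-(1/((n:ℝ)+2))) := by nlinarith [this]
      calc Real.exp 1 * ((n:ℝ)+1)^(n+2)
          ≤ Real.exp 1 * (((n:ℝ)+2) * Real.exp (-(1/((n:ℝ)+2))))^(n+2) := by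
            apply mul_le_mul_of_nonneg_left _ (by positivity)
            exact pow_le_pow_left₀ (by positivity) h2 _
      _ = Real.exp 1 * (((n:ℝ)+2)^(n+2) * Real.exp (-(1/((n:ℝ)+2)))^(n+2)) := by rw [mul_pow]
      _ = ((n:ℝ)+2)^(n+2) * (Real.exp 1 * Real.exp (-(1/((n:ℝ)+2)))^(n+2)) := by ring
      _ = ((n:ℝ)+2)^(n+2) := by
            rw [← Real.exp_nat_mul, ← Real.exp_add]
            have h4 : (1:ℝ) + ((n+2 : ℕ):ℝ) * (-(1/((n:ℝ)+2))) = 0 := by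
              push_cast; field_simp; ring
            rw [h4, Real.exp_zero, mul_one]
    push_cast [Nat.factorial_succ]
    calc Real.exp ((n:ℝ)+1) * (((n:ℝ)+1) * n.factorial)
        = Real.exp 1 * ((n:ℝ)+1) * (Real.exp n * n.factorial) := by
          rw [Real.exp_add]; ring
    _ ≤ Real.exp 1 * ((n:ℝ)+1) * ((n:ℝ)+1)^(n+1) := by
          apply mul_le_mul_of_nonneg_left _ (by positivity)
          simpa using ih
    _ = Real.exp 1 * ((n:ℝ)+1)^(n+2) := by ring
    _ ≤ ((n:ℝ)+2)^(n+2) := key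
    _ = (((n:ℝ)+1) + 1)^((n+1)+1) := by ring



lemma Gamma_mono {a b : ℝ} (ha : 2 ≤ a) (hab : a ≤ b) : Real.Gamma a ≤ Real.Gamma b :=
  Real.Gamma_strictMonoOn_Ici.monotoneOn ha (le_trans ha hab) hab

lemma Gamma_three : Real.Gamma 3 = 2 := by
  have h := Real.Gamma_nat_eq_factorial 2
  norm_num at h
  convert h using 2
  norm_num

lemma logGamma_small_upper {u : ℝ} (h0 : 0 ≤ u) (h1 : u ≤ 1) :
    Real.log (Real.Gamma (u + 1)) ≤ 0 := by
  have hc := Real.convexOn_log_Gamma.2 (show (1:ℝ) ∈ Set.Ioi 0 by norm_num)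
      (show (2:ℝ) ∈ Set.Ioi 0 by norm_num) (show (0:ℝ) ≤ 1 - u by linarith) h0 (by ring)
  simp only [smul_eq_mul, Function.comp_apply, Real.Gamma_one, Real.Gamma_two, Real.log_one,
    mul_one] at hc
  have harg : (1 : ℝ) - u + u * 2 = u + 1 := by ring
  rw [harg] at hc
  linarith

lemma logGamma_small_lower {u : ℝ} (h0 : 0 ≤ u) (h1 : u ≤ 1) :
    -Real.log 2 ≤ Real.log (Real.Gamma (u + 1)) := by
  have hlt : u < 2 := by linarith
  have hden : (0:ℝ) < 2 - u := by linarith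
  have hm : (u + 1) ∈ Set.Ioi (0:ℝ) := by simp only [Set.mem_Ioi]; linarith
  have h3 : (3:ℝ) ∈ Set.Ioi (0:ℝ) := by norm_num
  have ha : (0:ℝ) ≤ 1 / (2 - u) := by positivity
  have hb : (0:ℝ) ≤ (1 - u) / (2 - u) := by
    apply div_nonneg (by linarith) hden.le
  have hab : 1 / (2 - u) + (1 - u) / (2 - u) = 1 := by field_simp; ring
  have hc := Real.convexOn_log_Gamma.2 hm h3 ha hb hab
  simp only [smul_eq_mul, Function.comp_apply] at hc
  have harg : 1 / (2 - u) * (u + 1) + (1 - u) / (2 - u) * 3 = 2 := by field_simp; ring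
  rw [harg, Real.Gamma_two, Real.log_one, Gamma_three] at hc
  -- 0 ≤ (1/(2-u)) * logΓ(u+1) + ((1-u)/(2-u)) * log 2
  have hl2 : (0:ℝ) ≤ Real.log 2 := Real.log_nonneg (by norm_num)
  have hlam : (0:ℝ) < 1 / (2 - u) := by positivity
  by_contra hcon
  push_neg at hcon
  have h5 : 1 / (2 - u) * Real.log (Real.Gamma (u + 1)) < 1 / (2 - u) * (-Real.log 2) :=
    (mul_lt_mul_iff_right₀ hlam).mpr hcon
  have h6 : (1 - u) / (2 - u) ≤ 1 / (2 - u) := by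
    gcongr
    · linarith
  nlinarith

lemma u_log_u_lower {u : ℝ} (h0 : 0 ≤ u) : u - 1 ≤ u * Real.log u := by
  rcases eq_or_lt_of_le h0 with h | h
  · simp [← h]
  · have hinv := Real.log_le_sub_one_of_pos (show 0 < u⁻¹ by positivity)
    rw [Real.log_inv] at hinv
    have h2 : u * (-Real.log u) ≤ u * (u⁻¹ - 1) := mul_le_mul_of_nonneg_left hinv h.le
    have h3 : u * (u⁻¹ - 1) = 1 - u := by field_simp
    nlinarith

lemma u_log_u_mono {a b : ℝ} (ha : 1 ≤ a) (hab : a ≤ b) :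
    a * Real.log a ≤ b * Real.log b := by
  have h1 : Real.log a ≤ Real.log b := Real.log_le_log (by linarith) hab
  have h2 : 0 ≤ Real.log a := Real.log_nonneg ha
  nlinarith




-- placeholders from previous chunks
lemma sandwich_lower {u : ℝ} (h0 : 0 ≤ u) :
    u * Real.log u - u - (2 * Real.log (u + 2) + 2) ≤ Real.log (Real.Gamma (u + 1)) := by
  have hl2 : (0:ℝ) ≤ Real.log (u + 2) := Real.log_nonneg (by linarith)
  have hlog2 : Real.log 2 ≤ Real.log (u + 2) := Real.log_le_log (by norm_num) (by linarith)
  rcases lt_or_ge u 1 with h1 | h1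
  · have h2 := logGamma_small_lower h0 h1.le
    have h3 : u * Real.log u ≤ 0 :=
      mul_nonpos_of_nonneg_of_nonpos h0 (Real.log_nonpos h0 h1.le)
    have hl2' : (0:ℝ) ≤ Real.log 2 := Real.log_nonneg (by norm_num)
    linarith
  · set m := Nat.floor u with hm
    have hm1 : 1 ≤ m := Nat.le_floor (by exact_mod_cast h1)
    have hm1' : (1:ℝ) ≤ (m:ℝ) := by exact_mod_cast hm1
    have hmu : (m:ℝ) ≤ u := Nat.floor_le h0
    have hum : u < (m:ℝ) + 1 := Nat.lt_floor_add_one u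
    have hmono : Real.Gamma ((m:ℝ) + 1) ≤ Real.Gamma (u + 1) :=
      Gamma_mono (by linarith) (by linarith)
    have hfact : Real.Gamma ((m:ℝ) + 1) = m.factorial := Real.Gamma_nat_eq_factorial m
    have hfpos : (0:ℝ) < m.factorial := by exact_mod_cast m.factorial_pos
    have hlog : Real.log (m.factorial : ℝ) ≤ Real.log (Real.Gamma (u + 1)) := by
      apply Real.log_le_log hfpos
      rw [← hfact]; exact hmono
    -- log m! ≥ m log m - m
    have hfl := fact_lower m
    have hfl2 : (m:ℝ) * Real.log m ≤ (m:ℝ) + Real.log (m.factorial : ℝ) := by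
      have := Real.log_le_log (by positivity) hfl
      rw [Real.log_pow, Real.log_mul (Real.exp_ne_zero _) hfpos.ne', Real.log_exp] at this
      exact_mod_cast this
    -- m log m - m ≥ m log u - u
    have hgibbs : (m:ℝ) * Real.log u - u ≤ (m:ℝ) * Real.log m - m :=
      gibbs_le (by linarith) (by linarith)
    -- m log u ≥ (u-1) log u
    have hlu : (0:ℝ) ≤ Real.log u := Real.log_nonneg h1
    have h4 : (u - 1) * Real.log u ≤ (m:ℝ) * Real.log u := by nlinarith
    have hlu2 : Real.log u ≤ Real.log (u + 2) := Real.log_le_log (by linarith) (by linarith)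
    nlinarith

lemma sandwich_upper {u : ℝ} (h0 : 0 ≤ u) :
    Real.log (Real.Gamma (u + 1)) ≤ u * Real.log u - u + (2 * Real.log (u + 2) + 2) := by
  have hl2 : (0:ℝ) ≤ Real.log (u + 2) := Real.log_nonneg (by linarith)
  rcases lt_or_ge u 1 with h1 | h1
  · have h2 := logGamma_small_upper h0 h1.le
    have h3 := u_log_u_lower h0
    linarith
  · set m := Nat.floor u with hm
    have hm1 : 1 ≤ m := Nat.le_floor (by exact_mod_cast h1)
    have hmu : (m:ℝ) ≤ u := Nat.floor_le h0
    have hum : u < (m:ℝ) + 1 := Nat.lt_floor_add_one u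
    have hmono : Real.Gamma (u + 1) ≤ Real.Gamma ((m:ℝ) + 2) :=
      Gamma_mono (by linarith) (by linarith)
    have hfact : Real.Gamma ((m:ℝ) + 2) = (m+1).factorial := by
      have := Real.Gamma_nat_eq_factorial (m+1)
      rw [show (((m+1):ℕ):ℝ) + 1 = (m:ℝ) + 2 by push_cast; ring] at this
      exact this
    have hfpos : (0:ℝ) < ((m+1).factorial : ℝ) := by exact_mod_cast (m+1).factorial_pos
    have hGpos : (0:ℝ) < Real.Gamma (u + 1) := Real.Gamma_pos_of_pos (by linarith)
    have hlog : Real.log (Real.Gamma (u + 1)) ≤ Real.log ((m+1).factorial : ℝ) := by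
      apply Real.log_le_log hGpos
      rw [← hfact]; exact hmono
    -- log (m+1)! ≤ (m+2) log (m+2) - (m+1)
    have hfu := fact_upper (m+1)
    have hfu2 : ((m:ℝ)+1) + Real.log ((m+1).factorial : ℝ) ≤ ((m:ℝ)+2) * Real.log ((m:ℝ)+2) := by
      have := Real.log_le_log (by positivity) hfu
      rw [Real.log_mul (Real.exp_ne_zero _) hfpos.ne', Real.log_exp, Real.log_pow] at this
      push_cast at this
      rw [show (m:ℝ) + 1 + 1 = (m:ℝ) + 2 by ring] at this
      linarith
    -- (m+2) log (m+2) ≤ (u+2) log (u+2)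
    have hmono2 : ((m:ℝ)+2) * Real.log ((m:ℝ)+2) ≤ (u+2) * Real.log (u+2) := by
      have hm1' : (1:ℝ) ≤ (m:ℝ) := by exact_mod_cast hm1
      exact u_log_u_mono (by linarith) (by linarith)
    -- u * (log(u+2) - log u) ≤ 2
    have hu0 : (0:ℝ) < u := by linarith
    have hdiff : Real.log (u+2) - Real.log u ≤ 2 / u := by
      have h := Real.log_le_sub_one_of_pos (show 0 < (u+2)/u by positivity)
      rw [Real.log_div (by linarith) hu0.ne'] at h
      have h2 : (u+2)/u - 1 = 2/u := by field_simp; ring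
      linarith [h2 ▸ h]
    have hmul : u * (Real.log (u+2) - Real.log u) ≤ 2 := by
      have := mul_le_mul_of_nonneg_left hdiff h0
      rw [mul_div_cancel₀] at this
      · linarith
      · exact hu0.ne'
    nlinarith

lemma logGamma_shift {v : ℝ} (hv : 0 ≤ v) :
    Real.log (Real.Gamma (v + 1)) = Real.log (Real.Gamma (v + 2)) - Real.log (v + 1) := by
  have h1 : v + 1 ≠ 0 := by positivity
  have h2 : Real.Gamma (v + 2) = (v + 1) * Real.Gamma (v + 1) := by
    have h := Real.Gamma_add_one (s := v + 1) h1
    rw [show v + 1 + 1 = v + 2 by ring] at h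
    exact h
  rw [h2, Real.log_mul (by positivity) (Real.Gamma_pos_of_pos (by linarith)).ne']
  ring

lemma mid_le {a b : ℝ} (ha : 0 ≤ a) (hb : 0 ≤ b) :
    Real.log (Real.Gamma ((a + b) / 2 + 1)) ≤
      (Real.log (Real.Gamma (a + 1)) + Real.log (Real.Gamma (b + 1))) / 2 := by
  have hc := Real.convexOn_log_Gamma.2 (show a + 1 ∈ Set.Ioi (0:ℝ) by simp only [Set.mem_Ioi]; linarith)
    (show b + 1 ∈ Set.Ioi (0:ℝ) by simp only [Set.mem_Ioi]; linarith)
    (show (0:ℝ) ≤ 1/2 by norm_num) (show (0:ℝ) ≤ 1/2 by norm_num) (by norm_num)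
  simp only [smul_eq_mul, Function.comp_apply] at hc
  rw [show (1/2 : ℝ) * (a + 1) + (1/2 : ℝ) * (b + 1) = (a + b) / 2 + 1 by ring] at hc
  linarith

lemma mid_lt {a b : ℝ} (ha : 0 ≤ a) (hb : 0 ≤ b) (hne : a ≠ b) :
    Real.log (Real.Gamma ((a + b) / 2 + 1)) <
      (Real.log (Real.Gamma (a + 1)) + Real.log (Real.Gamma (b + 1))) / 2 := by
  have h1 := mid_le (show (0:ℝ) ≤ a + 1 by linarith) (show (0:ℝ) ≤ b + 1 by linarith)
  rw [show (a + 1 + (b + 1)) / 2 + 1 = (a + b) / 2 + 2 by ring,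
      show a + 1 + 1 = a + 2 by ring, show b + 1 + 1 = b + 2 by ring] at h1
  have hlog := strictConcaveOn_log_Ioi.2 (show a + 1 ∈ Set.Ioi (0:ℝ) by simp only [Set.mem_Ioi]; linarith)
    (show b + 1 ∈ Set.Ioi (0:ℝ) by simp only [Set.mem_Ioi]; linarith)
    (show a + 1 ≠ b + 1 by intro h; exact hne (by linarith))
    (show (0:ℝ) < 1/2 by norm_num) (show (0:ℝ) < 1/2 by norm_num) (by norm_num)
  simp only [smul_eq_mul] at hlog
  rw [show (1/2 : ℝ) * (a + 1) + (1/2 : ℝ) * (b + 1) = (a + b) / 2 + 1 by ring] at hlog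
  rw [logGamma_shift ha, logGamma_shift hb, logGamma_shift (show (0:ℝ) ≤ (a+b)/2 by positivity)]
  linarith


noncomputable def ell (k : ℕ) (p : Fin k → ℝ) (n : ℕ) (y : Fin k → ℝ) : ℝ :=
  Real.log (Real.Gamma ((n : ℝ) + 1))
    - ∑ j, Real.log (Real.Gamma ((n : ℝ) * y j + 1))
    + ∑ j, (n : ℝ) * y j * Real.log (p j)

def splx (k : ℕ) : Set (Fin k → ℝ) := {x | (∀ j, 0 ≤ x j) ∧ ∑ j, x j = 1}

lemma splx_compact (k : ℕ) : IsCompact (splx k) := by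
  have h : splx k = stdSimplex ℝ (Fin k) := rfl
  rw [h]; exact isCompact_stdSimplex _ _

lemma coord_le_one {k : ℕ} {z : Fin k → ℝ} (hz : z ∈ splx k) (j : Fin k) : z j ≤ 1 := by
  calc z j ≤ ∑ i, z i := Finset.single_le_sum (fun i _ => hz.1 i) (Finset.mem_univ j)
  _ = 1 := hz.2

lemma ell_contOn (k n : ℕ) (p : Fin k → ℝ) : ContinuousOn (ell k p n) (splx k) := by
  intro x hx
  apply ContinuousAt.continuousWithinAt
  have hsum1 : ContinuousAt (fun x : Fin k → ℝ =>
      ∑ j, Real.log (Real.Gamma ((n : ℝ) * x j + 1))) x := by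
    apply tendsto_finset_sum
    intro j _
    have hpos : 0 < (n : ℝ) * x j + 1 := by
      have h1 := hx.1 j
      have h2 : (0:ℝ) ≤ (n:ℝ) := Nat.cast_nonneg n
      nlinarith
    have hinner : ContinuousAt (fun x : Fin k → ℝ => (n : ℝ) * x j + 1) x :=
      ((continuous_const.mul (continuous_apply j)).add continuous_const).continuousAt
    have hg : ContinuousAt Real.Gamma ((n : ℝ) * x j + 1) := by
      apply (Real.differentiableAt_Gamma _).continuousAt
      intro m
      have : (0:ℝ) < (n : ℝ) * x j + 1 := hpos
      intro hcon
      have hm : -(m:ℝ) ≤ 0 := by simp [Nat.cast_nonneg]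
      rw [hcon] at this
      linarith
    have hcomp : ContinuousAt (fun y : Fin k → ℝ => Real.Gamma ((n : ℝ) * y j + 1)) x :=
      ContinuousAt.comp (f := fun y : Fin k → ℝ => (n : ℝ) * y j + 1) hg hinner
    exact hcomp.log (Real.Gamma_pos_of_pos hpos).ne'
  have hsum2 : Continuous (fun x : Fin k → ℝ => ∑ j, (n : ℝ) * x j * Real.log (p j)) := by
    apply continuous_finset_sum
    intro j _
    exact ((continuous_const.mul (continuous_apply j)).mul continuous_const)
  exact (continuousAt_const.sub hsum1).add hsum2.continuousAt

lemma expand_sum (k n : ℕ) (z : Fin k → ℝ) (hz : z ∈ splx k) :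
    ∑ j, ((n:ℝ) * z j * Real.log ((n:ℝ) * z j) - (n:ℝ) * z j)
      = (n:ℝ) * Real.log n - (n:ℝ) + (n:ℝ) * ∑ j, z j * Real.log (z j) := by
  have hterm : ∀ j, (n:ℝ) * z j * Real.log ((n:ℝ) * z j) - (n:ℝ) * z j
      = z j * ((n:ℝ) * Real.log n) + (n:ℝ) * (z j * Real.log (z j)) - (n:ℝ) * z j := by
    intro j
    rcases eq_or_lt_of_le (hz.1 j) with h | h
    · simp [← h]
    · rcases Nat.eq_zero_or_pos n with hn | hn
      · simp [hn]
      · have hn' : (0:ℝ) < n := by exact_mod_cast hn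
        rw [Real.log_mul hn'.ne' h.ne']
        ring
  rw [Finset.sum_congr rfl (fun j _ => hterm j), Finset.sum_sub_distrib,
    Finset.sum_add_distrib, ← Finset.sum_mul, ← Finset.mul_sum, ← Finset.mul_sum, hz.2]
  ring

lemma key_bound (k n : ℕ) (p x : Fin k → ℝ) (hp : ∀ j, 0 < p j) (hps : ∑ j, p j = 1)
    (hx : x ∈ splx k) (hmax : ell k p n p ≤ ell k p n x) :
    (n:ℝ) * (∑ j, (x j * Real.log (x j) - x j * Real.log (p j)))
      ≤ 2 * (k:ℝ) * (2 * Real.log ((n:ℝ) + 2) + 2) := by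
  have hpx : p ∈ splx k := ⟨fun j => (hp j).le, hps⟩
  have hn0 : (0:ℝ) ≤ (n:ℝ) := Nat.cast_nonneg n
  set E : ℝ := 2 * Real.log ((n:ℝ) + 2) + 2 with hE
  have hlogmono : ∀ (z : Fin k → ℝ), z ∈ splx k → ∀ j,
      Real.log ((n:ℝ) * z j + 2) ≤ Real.log ((n:ℝ) + 2) := by
    intro z hz j
    apply Real.log_le_log (by nlinarith [hz.1 j])
    have h1 := coord_le_one hz j
    nlinarith [hz.1 j]
  have hub : ∀ j, Real.log (Real.Gamma ((n:ℝ) * p j + 1))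
      ≤ (n:ℝ) * p j * Real.log ((n:ℝ) * p j) - (n:ℝ) * p j + E := by
    intro j
    have h1 := sandwich_upper (u := (n:ℝ) * p j) (mul_nonneg hn0 (hp j).le)
    have h2 := hlogmono p hpx j
    rw [hE]; linarith
  have hlb : ∀ j, (n:ℝ) * x j * Real.log ((n:ℝ) * x j) - (n:ℝ) * x j - E
      ≤ Real.log (Real.Gamma ((n:ℝ) * x j + 1)) := by
    intro j
    have h1 := sandwich_lower (u := (n:ℝ) * x j) (by nlinarith [hx.1 j])
    have h2 := hlogmono x hx j
    rw [hE]; linarith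
  have hsum_ub : ∑ j, Real.log (Real.Gamma ((n:ℝ) * p j + 1))
      ≤ (∑ j, ((n:ℝ) * p j * Real.log ((n:ℝ) * p j) - (n:ℝ) * p j)) + (k:ℝ) * E := by
    calc ∑ j, Real.log (Real.Gamma ((n:ℝ) * p j + 1))
        ≤ ∑ j, ((n:ℝ) * p j * Real.log ((n:ℝ) * p j) - (n:ℝ) * p j + E) :=
          Finset.sum_le_sum (fun j _ => hub j)
    _ = (∑ j, ((n:ℝ) * p j * Real.log ((n:ℝ) * p j) - (n:ℝ) * p j)) + (k:ℝ) * E := by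
        simp only [Finset.sum_add_distrib, Finset.sum_sub_distrib, Finset.sum_const,
          Finset.card_univ, Fintype.card_fin, nsmul_eq_mul]
        try ring
  have hsum_lb : (∑ j, ((n:ℝ) * x j * Real.log ((n:ℝ) * x j) - (n:ℝ) * x j)) - (k:ℝ) * E
      ≤ ∑ j, Real.log (Real.Gamma ((n:ℝ) * x j + 1)) := by
    calc (∑ j, ((n:ℝ) * x j * Real.log ((n:ℝ) * x j) - (n:ℝ) * x j)) - (k:ℝ) * E
        = ∑ j, ((n:ℝ) * x j * Real.log ((n:ℝ) * x j) - (n:ℝ) * x j - E) := by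
          simp only [Finset.sum_sub_distrib, Finset.sum_const,
            Finset.card_univ, Fintype.card_fin, nsmul_eq_mul]
          try ring
    _ ≤ ∑ j, Real.log (Real.Gamma ((n:ℝ) * x j + 1)) :=
          Finset.sum_le_sum (fun j _ => hlb j)
  have hEx := expand_sum k n x hx
  have hEp := expand_sum k n p hpx
  have hBx : ∑ j, (n:ℝ) * x j * Real.log (p j) = (n:ℝ) * ∑ j, x j * Real.log (p j) := by
    rw [Finset.mul_sum]; exact Finset.sum_congr rfl (fun j _ => by ring)
  have hBp : ∑ j, (n:ℝ) * p j * Real.log (p j) = (n:ℝ) * ∑ j, p j * Real.log (p j) := by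
    rw [Finset.mul_sum]; exact Finset.sum_congr rfl (fun j _ => by ring)
  have hsplit : ∑ j, (x j * Real.log (x j) - x j * Real.log (p j))
      = (∑ j, x j * Real.log (x j)) - ∑ j, x j * Real.log (p j) :=
    Finset.sum_sub_distrib _ _
  unfold ell at hmax
  rw [hBx, hBp] at hmax
  rw [hsplit]
  have hexp : (n:ℝ) * ((∑ j, x j * Real.log (x j)) - ∑ j, x j * Real.log (p j))
      = (n:ℝ) * (∑ j, x j * Real.log (x j)) - (n:ℝ) * (∑ j, x j * Real.log (p j)) := by ring
  linarith [hexp, hsum_ub, hsum_lb, hEx, hEp, hmax]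

lemma D_pos (k : ℕ) (p x : Fin k → ℝ) (hp : ∀ j, 0 < p j) (hps : ∑ j, p j = 1)
    (hx : x ∈ splx k) (hne : x ≠ p) :
    0 < ∑ j, (x j * Real.log (x j) - x j * Real.log (p j)) := by
  have hsum : ∑ j, (x j * Real.log (x j) - x j * Real.log (p j))
      = ∑ j, ((x j * Real.log (x j) - x j) - (x j * Real.log (p j) - p j)) := by
    simp only [Finset.sum_sub_distrib]
    rw [hx.2, hps]
    ring
  rw [hsum]
  obtain ⟨j0, hj0⟩ : ∃ j, x j ≠ p j := by
    by_contra h; push_neg at h; exact hne (funext h)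
  have hle : ∀ j ∈ Finset.univ, (0:ℝ) ≤ (x j * Real.log (x j) - x j) - (x j * Real.log (p j) - p j) := by
    intro j _
    rcases eq_or_lt_of_le (hx.1 j) with h | h
    · simp [← h]; exact (hp j).le
    · linarith [gibbs_le h (hp j)]
  have hlt : (0:ℝ) < (x j0 * Real.log (x j0) - x j0) - (x j0 * Real.log (p j0) - p j0) := by
    linarith [gibbs_lt (hx.1 j0) (hp j0) hj0]
  calc (0:ℝ) = ∑ _j : Fin k, (0:ℝ) := by simp
  _ < _ := Finset.sum_lt_sum hle ⟨j0, Finset.mem_univ j0, by simpa using hlt⟩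

lemma eventually_lt (k : ℕ) (δ : ℝ) (hδ : 0 < δ) :
    ∀ᶠ n : ℕ in atTop, 2 * (k:ℝ) * (2 * Real.log ((n:ℝ) + 2) + 2) < (n:ℝ) * δ := by
  have h1 : (fun n : ℕ => Real.log ((n:ℝ) + 2)) =o[atTop] (fun n : ℕ => ((n:ℝ) + 2)) :=
    Real.isLittleO_log_id_atTop.comp_tendsto
      (tendsto_atTop_add_const_right _ 2 tendsto_natCast_atTop_atTop)
  have h2 : (fun n : ℕ => ((n:ℝ) + 2)) =O[atTop] (fun n : ℕ => (n:ℝ)) := by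
    apply Asymptotics.IsBigO.of_bound 3
    filter_upwards [eventually_ge_atTop 1] with n hn
    have hn' : (1:ℝ) ≤ (n:ℝ) := by exact_mod_cast hn
    simp only [Real.norm_eq_abs]
    rw [abs_of_nonneg (by linarith), abs_of_nonneg (by linarith)]
    linarith
  have hlog : (fun n : ℕ => Real.log ((n:ℝ) + 2)) =o[atTop] (fun n : ℕ => (n:ℝ)) :=
    h1.trans_isBigO h2
  have hconst : (fun _ : ℕ => (1:ℝ)) =o[atTop] (fun n : ℕ => (n:ℝ)) := by
    rw [Asymptotics.isLittleO_const_left]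
    right
    exact
      tendsto_norm_atTop_atTop.comp (tendsto_natCast_atTop_atTop (R := ℝ))
  have h3 : (fun n : ℕ => 2 * (k:ℝ) * (2 * Real.log ((n:ℝ) + 2) + 2))
      =o[atTop] (fun n : ℕ => (n:ℝ)) := by
    have hsum := (hlog.const_mul_left (4 * (k:ℝ))).add (hconst.const_mul_left (4 * (k:ℝ)))
    apply hsum.congr_left
    intro n
    ring
  have h4 := h3.def (half_pos hδ)
  filter_upwards [h4, eventually_ge_atTop 1] with n hn hn1
  have hn' : (1:ℝ) ≤ (n:ℝ) := by exact_mod_cast hn1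
  have hl0 : (0:ℝ) ≤ Real.log ((n:ℝ) + 2) := Real.log_nonneg (by linarith)
  have hnn : (0:ℝ) ≤ 2 * (k:ℝ) * (2 * Real.log ((n:ℝ) + 2) + 2) := by positivity
  rw [Real.norm_eq_abs, Real.norm_eq_abs, abs_of_nonneg hnn, abs_of_nonneg (by linarith)] at hn
  nlinarith

end MMC


theorem multinomial_mode_convergence (k : ℕ) (hk : 2 ≤ k)
    (p : Fin k → ℝ) (hp : ∀ j, 0 < p j) (hps : ∑ j, p j = 1) :
    ∃ xhat : ℕ → (Fin k → ℝ),
      (∀ n : ℕ, 1 ≤ n →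
        xhat n ∈ {x : Fin k → ℝ | (∀ j, 0 ≤ x j) ∧ ∑ j, x j = 1} ∧
        (∀ y ∈ {x : Fin k → ℝ | (∀ j, 0 ≤ x j) ∧ ∑ j, x j = 1}, y ≠ xhat n →
          Real.log (Real.Gamma ((n : ℝ) + 1))
              - ∑ j, Real.log (Real.Gamma ((n : ℝ) * y j + 1))
              + ∑ j, (n : ℝ) * y j * Real.log (p j)
            < Real.log (Real.Gamma ((n : ℝ) + 1))
              - ∑ j, Real.log (Real.Gamma ((n : ℝ) * xhat n j + 1))
              + ∑ j, (n : ℝ) * xhat n j * Real.log (p j))) ∧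
      (∀ᶠ n : ℕ in atTop, ∀ j, 0 < xhat n j) ∧
      Tendsto xhat atTop (nhds p) := by
  classical
  have hpS : p ∈ MMC.splx k := ⟨fun j => (hp j).le, hps⟩
  have hSc := MMC.splx_compact k
  have hmax : ∀ n : ℕ, ∃ x ∈ MMC.splx k, IsMaxOn (MMC.ell k p n) (MMC.splx k) x :=
    fun n => hSc.exists_isMaxOn ⟨p, hpS⟩ (MMC.ell_contOn k n p)
  choose xhat hxS hxM using hmax
  have hstrict : ∀ n : ℕ, 1 ≤ n → ∀ y ∈ MMC.splx k, y ≠ xhat n →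
      MMC.ell k p n y < MMC.ell k p n (xhat n) := by
    intro n hn y hyS hyne
    rcases lt_or_ge (MMC.ell k p n y) (MMC.ell k p n (xhat n)) with h | h
    · exact h
    exfalso
    have heq : MMC.ell k p n y = MMC.ell k p n (xhat n) := le_antisymm (hxM n hyS) h
    have hn' : (0:ℝ) < (n:ℝ) := by exact_mod_cast hn
    set m : Fin k → ℝ := fun j => (xhat n j + y j) / 2 with hm
    have hmS : m ∈ MMC.splx k := by
      constructor
      · intro j
        have h1 := (hxS n).1 j
        have h2 := hyS.1 j
        simp only [hm]
        positivity
      · simp only [hm]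
        rw [← Finset.sum_div, Finset.sum_add_distrib, (hxS n).2, hyS.2]
        norm_num
    obtain ⟨j0, hj0⟩ : ∃ j, xhat n j ≠ y j := by
      by_contra hcon
      push_neg at hcon
      exact hyne (funext fun j => (hcon j).symm)
    have hsumlt : ∑ j, Real.log (Real.Gamma ((n:ℝ) * m j + 1)) <
        ∑ j, ((Real.log (Real.Gamma ((n:ℝ) * xhat n j + 1))
          + Real.log (Real.Gamma ((n:ℝ) * y j + 1))) / 2) := by
      apply Finset.sum_lt_sum
      · intro j _
        have hmj : (n:ℝ) * m j = ((n:ℝ) * xhat n j + (n:ℝ) * y j) / 2 := by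
          simp only [hm]; ring
        rw [hmj]
        exact MMC.mid_le (mul_nonneg hn'.le ((hxS n).1 j)) (mul_nonneg hn'.le (hyS.1 j))
      · refine ⟨j0, Finset.mem_univ j0, ?_⟩
        have hmj : (n:ℝ) * m j0 = ((n:ℝ) * xhat n j0 + (n:ℝ) * y j0) / 2 := by
          simp only [hm]; ring
        rw [hmj]
        exact MMC.mid_lt (mul_nonneg hn'.le ((hxS n).1 j0)) (mul_nonneg hn'.le (hyS.1 j0))
          (fun hcon => hj0 (mul_left_cancel₀ hn'.ne' hcon))
    have hsplit : ∑ j, ((Real.log (Real.Gamma ((n:ℝ) * xhat n j + 1))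
          + Real.log (Real.Gamma ((n:ℝ) * y j + 1))) / 2)
        = ((∑ j, Real.log (Real.Gamma ((n:ℝ) * xhat n j + 1)))
          + ∑ j, Real.log (Real.Gamma ((n:ℝ) * y j + 1))) / 2 := by
      rw [← Finset.sum_div, Finset.sum_add_distrib]
    have hlin : ∑ j, (n:ℝ) * m j * Real.log (p j)
        = ((∑ j, (n:ℝ) * xhat n j * Real.log (p j))
          + ∑ j, (n:ℝ) * y j * Real.log (p j)) / 2 := by
      have hterm : ∀ j, (n:ℝ) * m j * Real.log (p j)
          = ((n:ℝ) * xhat n j * Real.log (p j) + (n:ℝ) * y j * Real.log (p j)) / 2 := by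
        intro j; simp only [hm]; ring
      rw [Finset.sum_congr rfl (fun j _ => hterm j), ← Finset.sum_div, Finset.sum_add_distrib]
    have hgoal : MMC.ell k p n (xhat n) < MMC.ell k p n m := by
      have hexp : MMC.ell k p n m = Real.log (Real.Gamma ((n : ℝ) + 1))
          - ∑ j, Real.log (Real.Gamma ((n : ℝ) * m j + 1))
          + ∑ j, (n : ℝ) * m j * Real.log (p j) := rfl
      have hexpx : MMC.ell k p n (xhat n) = Real.log (Real.Gamma ((n : ℝ) + 1))
          - ∑ j, Real.log (Real.Gamma ((n : ℝ) * xhat n j + 1))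
          + ∑ j, (n : ℝ) * xhat n j * Real.log (p j) := rfl
      have hexpy : MMC.ell k p n y = Real.log (Real.Gamma ((n : ℝ) + 1))
          - ∑ j, Real.log (Real.Gamma ((n : ℝ) * y j + 1))
          + ∑ j, (n : ℝ) * y j * Real.log (p j) := rfl
      rw [hexp, hexpx]
      rw [hexpx, hexpy] at heq
      linarith [hsumlt, hsplit, hlin, heq]
    exact absurd (hxM n hmS) (not_le.mpr hgoal)
  have hclose : ∀ ε : ℝ, 0 < ε → ∀ᶠ n : ℕ in atTop, dist (xhat n) p < ε := by
    intro ε hε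
    set D : (Fin k → ℝ) → ℝ := fun x => ∑ j, (x j * Real.log (x j) - x j * Real.log (p j))
      with hD
    by_cases hK : ∃ z, z ∈ MMC.splx k ∧ ε ≤ dist z p
    · have hKc : IsCompact (MMC.splx k ∩ {z | ε ≤ dist z p}) :=
        hSc.inter_right (isClosed_le continuous_const (continuous_id.dist continuous_const))
      have hKne : (MMC.splx k ∩ {z | ε ≤ dist z p}).Nonempty := by
        obtain ⟨z, hz1, hz2⟩ := hK
        exact ⟨z, hz1, hz2⟩
      have hDcont : Continuous D := by
        apply continuous_finset_sum
        intro j _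
        exact (Real.continuous_mul_log.comp (continuous_apply j)).sub
          ((continuous_apply j).mul continuous_const)
      obtain ⟨z, hzK, hzmin⟩ := hKc.exists_isMinOn hKne hDcont.continuousOn
      have hzp : z ≠ p := by
        intro h
        have h2 := hzK.2
        rw [h] at h2
        simp only [Set.mem_setOf_eq, dist_self] at h2
        linarith
      have hδ : 0 < D z := MMC.D_pos k p z hp hps hzK.1 hzp
      filter_upwards [MMC.eventually_lt k (D z) hδ, eventually_ge_atTop 1] with n hn hn1
      have hkb := MMC.key_bound k n p (xhat n) hp hps (hxS n) (hxM n hpS)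
      by_contra hcon
      push_neg at hcon
      have hxK : xhat n ∈ MMC.splx k ∩ {z | ε ≤ dist z p} := ⟨hxS n, hcon⟩
      have h2 : D z ≤ D (xhat n) := hzmin hxK
      have hn0 : (0:ℝ) ≤ (n:ℝ) := Nat.cast_nonneg n
      have h3 : (n:ℝ) * D z ≤ (n:ℝ) * D (xhat n) := mul_le_mul_of_nonneg_left h2 hn0
      rw [hD] at h3 hn
      simp only at h3 hn
      linarith [hkb, hn, h3]
    · push_neg at hK
      filter_upwards with n
      exact hK (xhat n) (hxS n)
  have htend : Tendsto xhat atTop (nhds p) := by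
    rw [Metric.tendsto_nhds]
    intro ε hε
    exact hclose ε hε
  have hj0ne : (Finset.univ : Finset (Fin k)).Nonempty := by
    refine ⟨⟨0, by omega⟩, Finset.mem_univ _⟩
  obtain ⟨j0, -, hj0min⟩ := Finset.exists_min_image Finset.univ p hj0ne
  have hint : ∀ᶠ n : ℕ in atTop, ∀ j, 0 < xhat n j := by
    filter_upwards [hclose (p j0) (hp j0)] with n hn j
    have h1 : |xhat n j - p j| ≤ dist (xhat n) p := by
      rw [← Real.dist_eq]
      exact dist_le_pi_dist (xhat n) p j
    have h2 := (abs_lt.mp (lt_of_le_of_lt h1 hn)).1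
    have h3 := hj0min j (Finset.mem_univ j)
    linarith
  exact ⟨xhat, fun n hn => ⟨hxS n, fun y hyS hyne => hstrict n hn y hyS hyne⟩, hint, htend⟩
end
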